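/- Let K ≥ 1 and let α_{ij} ≥ 0 for all i,j ∈ {1,...,K}, and let d_1,...,d_K ∈ ℝ with d_i ≥ 0. Then there exist r_1,...,r_K ≤ 0 such that d_i ≤ α_{ii} + r_i and d_i ≤ α_{ii} + r_i − (α_{ij} + r_j) for all i ≠ j, if and only if d_i ≤ α_{ii} for all i, and for every m ≥ 2 and every sequence of distinct indices i_1,...,i_m (with indices taken cyclically, i_0 = i_m), ∑_{j=1}^m d_{i_j} ≤ ∑_{j=1}^m (α_{i_j i_j} − α_{i_{j-1} i_j}). -/

import Mathlib

/-- Cyclic predecessor in `Fin m`. -/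
def cprev {m : ℕ} (j : Fin m) : Fin m := ⟨(j.1 + m - 1) % m, Nat.mod_lt _ j.pos⟩

lemma cprev_eq_sub_one {m : ℕ} [NeZero m] (j : Fin m) : cprev j = j - 1 := by
  have hm : 0 < m := Nat.pos_of_ne_zero (NeZero.ne m)
  rw [Fin.sub_def]
  apply Fin.ext
  simp only [cprev]
  rcases Nat.lt_or_ge 1 m with h | h
  · have h1 : ((1 : Fin m) : ℕ) = 1 := by
      rw [Fin.val_one']; exact Nat.mod_eq_of_lt h
    rw [h1]; congr 1; omega
  · interval_cases m
    simp [Nat.mod_one]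

lemma cprev_ne_self {m : ℕ} (hm : 2 ≤ m) (j : Fin m) : cprev j ≠ j := by
  haveI : NeZero m := ⟨by omega⟩
  rw [cprev_eq_sub_one]
  intro h
  have h2 : (1 : Fin m) = 0 := sub_eq_self.mp h
  have := congrArg Fin.val h2
  rw [Fin.val_one'] at this
  simp [Nat.mod_eq_of_lt (by omega : 1 < m)] at this

lemma sum_cprev {m : ℕ} [NeZero m] (f : Fin m → ℝ) : ∑ j, f (cprev j) = ∑ j, f j := by
  simp only [cprev_eq_sub_one]
  exact Fintype.sum_equiv (Equiv.subRight (1 : Fin m)) _ _ (fun j => rfl)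

lemma sum_fin_get {β : Type*} (l : List β) (f : β → ℝ) :
    ∑ j : Fin l.length, f (l.get j) = (l.map f).sum := by
  rw [← List.sum_ofFn]
  congr 1
  rw [show (fun j => f (l.get j)) = f ∘ l.get from rfl, ← List.map_ofFn, List.ofFn_get]

section TIN

variable {K : ℕ} (α : Fin K → Fin K → ℝ) (d : Fin K → ℝ)

/-- cyclic-index access into a list -/
def nth (c : List (Fin K)) (hc : c ≠ []) (k : ℕ) : Fin K :=
  c.get ⟨k % c.length, Nat.mod_lt _ (List.length_pos_iff.mpr hc)⟩

lemma nth_of_lt (c : List (Fin K)) (hc : c ≠ []) {k : ℕ} (hk : k < c.length) :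
    nth c hc k = c.get ⟨k, hk⟩ := by
  simp only [nth]
  congr 1
  exact Fin.ext (Nat.mod_eq_of_lt hk)

lemma nth_cons (a : Fin K) (l : List (Fin K)) (hl : l ≠ []) {k : ℕ} (hk : k < l.length) :
    nth (a :: l) (by simp) (k + 1) = nth l hl k := by
  rw [nth_of_lt _ _ (by simpa using Nat.succ_lt_succ hk), nth_of_lt _ _ hk]
  simp

lemma nth_zero (c : List (Fin K)) (hc : c ≠ []) : nth c hc 0 = c.head hc := by
  rw [nth_of_lt _ _ (List.length_pos_iff.mpr hc)]
  cases c with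
  | nil => exact absurd rfl hc
  | cons a t => rfl

lemma nth_len (c : List (Fin K)) (hc : c ≠ []) : nth c hc c.length = c.head hc := by
  rw [← nth_zero c hc]
  simp [nth]

lemma nth_last (c : List (Fin K)) (hc : c ≠ []) :
    nth c hc (c.length - 1) = c.getLast hc := by
  rw [nth_of_lt _ _ (by have := List.length_pos_iff.mpr hc; omega), List.getLast_eq_getElem]; rfl

/-- cross weight of a path -/
def cw : List (Fin K) → ℝ
  | a :: b :: t => α a b + cw (b :: t)
  | _ => 0

lemma cw_cons (a : Fin K) (l : List (Fin K)) (hl : l ≠ []) :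
    cw α (a :: l) = α a (l.head hl) + cw α l := by
  cases l with
  | nil => exact absurd rfl hl
  | cons b t => rfl

lemma cw_append : ∀ (x y : List (Fin K)) (hx : x ≠ []) (hy : y ≠ []),
    cw α (x ++ y) = cw α x + α (x.getLast hx) (y.head hy) + cw α y
  | [a], y, _, hy => by
    rw [List.singleton_append, cw_cons α a y hy]
    simp [cw]
  | a :: b :: t, y, _, hy => by
    have ih := cw_append (b :: t) y (by simp) hy
    show cw α (a :: (b :: t ++ y)) = _
    rw [cw_cons α a _ (by simp)]
    have hh : (b :: t ++ y).head (by simp) = b := rfl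
    rw [hh, ih]
    have hL : (a :: b :: t).getLast (by simp) = (b :: t).getLast (by simp) := by
      simp [List.getLast_cons]
    rw [hL, cw_cons α a (b :: t) (by simp)]
    have hb : (b :: t : List (Fin K)).head (by simp) = b := rfl
    rw [hb]
    ring

/-- value of a path (head is the endpoint) -/
def pv (l : List (Fin K)) : ℝ := (l.map (fun a => d a - α a a)).sum + cw α l

lemma pv_single (a : Fin K) : pv α d [a] = d a - α a a := by
  simp [pv, cw]

lemma pv_cons (a : Fin K) (l : List (Fin K)) (hl : l ≠ []) :
    pv α d (a :: l) = (d a - α a a + α a (l.head hl)) + pv α d l := by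
  simp only [pv, List.map_cons, List.sum_cons, cw_cons α a l hl]
  ring

lemma pv_append (x y : List (Fin K)) (hx : x ≠ []) (hy : y ≠ []) :
    pv α d (x ++ y) = pv α d x + α (x.getLast hx) (y.head hy) + pv α d y := by
  simp only [pv, List.map_append, List.sum_append, cw_append α x y hx hy]
  ring

lemma cw_eq_sum : ∀ (c : List (Fin K)) (hc : c ≠ []),
    ∑ k ∈ Finset.range (c.length - 1), α (nth c hc k) (nth c hc (k + 1)) = cw α c
  | [a], _ => by simp [cw]
  | a :: b :: t, _ => by
    have ih := cw_eq_sum (b :: t) (by simp)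
    have hlen : (a :: b :: t).length - 1 = ((b :: t).length - 1) + 1 := by simp
    rw [hlen, Finset.sum_range_succ']
    have h0 : α (nth (a :: b :: t) (by simp) 0) (nth (a :: b :: t) (by simp) 1) = α a b := by
      rw [nth_of_lt _ _ (by simp), nth_of_lt _ _ (by simp)]
      rfl
    have hstep : ∀ k ∈ Finset.range ((b :: t).length - 1),
        α (nth (a :: b :: t) (by simp) (k + 1)) (nth (a :: b :: t) (by simp) (k + 1 + 1))
        = α (nth (b :: t) (by simp) k) (nth (b :: t) (by simp) (k + 1)) := by
      intro k hk
      simp only [Finset.mem_range, List.length_cons] at hk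
      rw [nth_cons a (b :: t) (by simp) (show k < (b :: t).length by
            simp only [List.length_cons]; omega),
          nth_cons a (b :: t) (by simp) (show k + 1 < (b :: t).length by
            simp only [List.length_cons]; omega)]
    rw [Finset.sum_congr rfl hstep, ih, h0]
    rw [cw_cons α a (b :: t) (by simp)]
    have hb : (b :: t : List (Fin K)).head (by simp) = b := rfl
    rw [hb]
    ring

lemma cyc_cross_sum (c : List (Fin K)) (hc : c ≠ []) :
    ∑ j : Fin c.length, α (c.get (cprev j)) (c.get j)
      = cw α c + α (c.getLast hc) (c.head hc) := by
  have hpos : 0 < c.length := List.length_pos_iff.mpr hc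
  haveI : NeZero c.length := ⟨by omega⟩
  have step1 : ∑ j : Fin c.length, α (c.get (cprev j)) (c.get j)
      = ∑ k : Fin c.length, α (c.get k) (c.get (k + 1)) := by
    refine (Fintype.sum_equiv (Equiv.addRight (1 : Fin c.length))
      (fun k => α (c.get k) (c.get (k + 1)))
      (fun j => α (c.get (cprev j)) (c.get j)) (fun k => ?_)).symm
    simp only [Equiv.coe_addRight]
    rw [cprev_eq_sub_one, add_sub_cancel_right]
  have step2 : ∑ k : Fin c.length, α (c.get k) (c.get (k + 1))
      = ∑ k ∈ Finset.range c.length, α (nth c hc k) (nth c hc (k + 1)) := by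
    rw [← Fin.sum_univ_eq_sum_range (fun k => α (nth c hc k) (nth c hc (k + 1))) c.length]
    refine Finset.sum_congr rfl (fun k _ => ?_)
    congr 1
    · rw [nth_of_lt _ _ (by exact_mod_cast k.2)]
    · simp only [nth]
      congr 1
      apply Fin.ext
      simp only [Fin.val_add, Fin.val_one']
      show ((k.1 + 1 % c.length) % c.length) = (k.1 + 1) % c.length
      conv_rhs => rw [Nat.add_mod, Nat.mod_eq_of_lt k.2]
  have step3 : ∑ k ∈ Finset.range c.length, α (nth c hc k) (nth c hc (k + 1))
      = (∑ k ∈ Finset.range (c.length - 1), α (nth c hc k) (nth c hc (k + 1)))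
        + α (nth c hc (c.length - 1)) (nth c hc c.length) := by
    have h : c.length = (c.length - 1) + 1 := by omega
    conv_lhs => rw [h, Finset.sum_range_succ]
    rw [show c.length - 1 + 1 = c.length from by omega]
  rw [step1, step2, step3, cw_eq_sum α c hc, nth_last c hc, nth_len c hc]

lemma neg_cycle
  (hcyc : ∀ m : ℕ, 2 ≤ m → ∀ i : Fin m → Fin K, Function.Injective i →
        ∑ j : Fin m, d (i j) ≤ ∑ j : Fin m, (α (i j) (i j) - α (i (cprev j)) (i j)))
  (c : List (Fin K)) (hc : c ≠ []) (hnd : c.Nodup) (hlen : 2 ≤ c.length) :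
    pv α d c + α (c.getLast hc) (c.head hc) ≤ 0 := by
  have key := hcyc c.length hlen c.get (List.nodup_iff_injective_get.mp hnd)
  have h1 : ∑ j : Fin c.length, (α (c.get j) (c.get j) - α (c.get (cprev j)) (c.get j))
      = ∑ j : Fin c.length, α (c.get j) (c.get j)
        - ∑ j : Fin c.length, α (c.get (cprev j)) (c.get j) := Finset.sum_sub_distrib _ _
  have h2 := cyc_cross_sum α c hc
  have h3 : (c.map (fun a => d a - α a a)).sum
      = ∑ j : Fin c.length, d (c.get j) - ∑ j : Fin c.length, α (c.get j) (c.get j) := by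
    rw [← sum_fin_get c (fun a => d a - α a a)]
    exact Finset.sum_sub_distrib _ _
  rw [h1, h2] at key
  simp only [pv]
  rw [h3]
  linarith

lemma pv_nonpos (hα : ∀ i j, 0 ≤ α i j) (hd1 : ∀ i, d i ≤ α i i)
  (hcyc : ∀ m : ℕ, 2 ≤ m → ∀ i : Fin m → Fin K, Function.Injective i →
        ∑ j : Fin m, d (i j) ≤ ∑ j : Fin m, (α (i j) (i j) - α (i (cprev j)) (i j)))
  (c : List (Fin K)) (hc : c ≠ []) (hnd : c.Nodup) :
    pv α d c ≤ 0 := by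
  rcases Nat.lt_or_ge c.length 2 with h | h
  · have h1 : c.length = 1 := by have := List.length_pos_iff.mpr hc; omega
    obtain ⟨a, rfl⟩ := List.length_eq_one_iff.mp h1
    rw [pv_single]
    linarith [hd1 a]
  · have := neg_cycle α d hcyc c hc hnd h
    have := hα (c.getLast hc) (c.head hc)
    linarith

end TIN

theorem stmt_2 (K : ℕ) (hK : 1 ≤ K) (α : Fin K → Fin K → ℝ)
    (hα : ∀ i j, 0 ≤ α i j) (d : Fin K → ℝ) (hd : ∀ i, 0 ≤ d i) :
    (∃ r : Fin K → ℝ,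
      (∀ i, r i ≤ 0) ∧
      (∀ i, d i ≤ α i i + r i) ∧
      (∀ i j, i ≠ j → d i ≤ α i i + r i - (α i j + r j))) ↔
    ((∀ i, d i ≤ α i i) ∧
      ∀ m : ℕ, 2 ≤ m → ∀ i : Fin m → Fin K, Function.Injective i →
        ∑ j : Fin m, d (i j) ≤ ∑ j : Fin m, (α (i j) (i j) - α (i (cprev j)) (i j))) := by
  constructor
  · rintro ⟨r, hr0, hr1, hr2⟩
    refine ⟨fun i => le_trans (hr1 i) (by linarith [hr0 i]), ?_⟩
    intro m hm i hinj
    haveI : NeZero m := ⟨by omega⟩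
    have key : ∀ j : Fin m, d (i (cprev j)) ≤ α (i (cprev j)) (i (cprev j)) + r (i (cprev j))
        - (α (i (cprev j)) (i j) + r (i j)) :=
      fun j => hr2 _ _ (fun h => cprev_ne_self hm j (hinj h))
    calc ∑ j : Fin m, d (i j) = ∑ j : Fin m, d (i (cprev j)) :=
          (sum_cprev fun k => d (i k)).symm
      _ ≤ ∑ j : Fin m, (α (i (cprev j)) (i (cprev j)) + r (i (cprev j))
            - (α (i (cprev j)) (i j) + r (i j))) := Finset.sum_le_sum (fun j _ => key j)
      _ = (∑ j : Fin m, α (i (cprev j)) (i (cprev j))) + (∑ j : Fin m, r (i (cprev j)))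
            - ((∑ j : Fin m, α (i (cprev j)) (i j)) + (∑ j : Fin m, r (i j))) := by
          rw [Finset.sum_sub_distrib, Finset.sum_add_distrib, Finset.sum_add_distrib]
      _ = (∑ j : Fin m, α (i j) (i j)) - (∑ j : Fin m, α (i (cprev j)) (i j)) := by
          rw [sum_cprev fun k => α (i k) (i k), sum_cprev fun k => r (i k)]
          ring
      _ = ∑ j : Fin m, (α (i j) (i j) - α (i (cprev j)) (i j)) :=
          (Finset.sum_sub_distrib _ _).symm
  · rintro ⟨hd1, hcyc⟩
    classical
    set S : Fin K → Set ℝ := fun i => pv α d '' {l | l.Nodup ∧ l.head? = some i} with hS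
    have hmem : ∀ i, pv α d [i] ∈ S i := fun i => ⟨[i], ⟨by simp, rfl⟩, rfl⟩
    have hne : ∀ i, (S i).Nonempty := fun i => ⟨_, hmem i⟩
    have hub : ∀ i x, x ∈ S i → x ≤ 0 := by
      rintro i x ⟨l, ⟨hnd, hhd⟩, rfl⟩
      exact pv_nonpos α d hα hd1 hcyc l (by rintro rfl; simp at hhd) hnd
    have hbdd : ∀ i, BddAbove (S i) := fun i => ⟨0, fun x hx => hub i x hx⟩
    refine ⟨fun i => sSup (S i), fun i => csSup_le (hne i) (hub i), ?_, ?_⟩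
    · intro i
      have h := le_csSup (hbdd i) (hmem i)
      rw [pv_single] at h
      linarith
    · intro i j hij
      have key : sSup (S j) ≤ sSup (S i) - (d i - α i i + α i j) := by
        apply csSup_le (hne j)
        rintro x ⟨l, ⟨hnd, hhd⟩, rfl⟩
        have hl : l ≠ [] := by rintro rfl; simp at hhd
        have hhead : l.head hl = j := by
          have := List.head?_eq_head (l := l) hl
          rw [hhd] at this
          exact (Option.some_injective _ this.symm)
        have hcons : pv α d (i :: l) = (d i - α i i + α i j) + pv α d l := by
          rw [pv_cons α d i l hl, hhead]
        by_cases hi : i ∈ l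
        · obtain ⟨s, t, rfl⟩ := List.append_of_mem hi
          have hs : s ≠ [] := by
            rintro rfl
            exact hij (by simpa using hhead)
          rw [List.nodup_append] at hnd
          obtain ⟨hnds, hndit, hdisj⟩ := hnd
          have hinotins : i ∉ s := fun h => hdisj i h i (by simp) rfl
          have hsplit : i :: (s ++ i :: t) = (i :: s) ++ (i :: t) := rfl
          have hpv : pv α d (i :: (s ++ i :: t))
              = pv α d (i :: s) + α ((i :: s).getLast (by simp)) ((i :: t).head (by simp))
                + pv α d (i :: t) := by
            rw [hsplit]
            exact pv_append α d (i :: s) (i :: t) (by simp) (by simp)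
          have hcyc0 : pv α d (i :: s)
              + α ((i :: s).getLast (by simp)) ((i :: s).head (by simp)) ≤ 0 :=
            neg_cycle α d hcyc (i :: s) (by simp)
              (List.nodup_cons.mpr ⟨hinotins, hnds⟩)
              (by simp only [List.length_cons]
                  have := List.length_pos_iff.mpr hs
                  omega)
          have hmem2 : pv α d (i :: t) ∈ S i := ⟨i :: t, ⟨hndit, rfl⟩, rfl⟩
          have h2 : pv α d (i :: t) ≤ sSup (S i) := le_csSup (hbdd i) hmem2
          have hh1 : ((i :: t).head (by simp) : Fin K) = i := rfl
          have hh2 : ((i :: s).head (by simp) : Fin K) = i := rfl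
          rw [hh1] at hpv
          rw [hh2] at hcyc0
          linarith [hcons, hpv, hcyc0, h2]
        · have hmem2 : pv α d (i :: l) ∈ S i :=
            ⟨i :: l, ⟨List.nodup_cons.mpr ⟨hi, hnd⟩, rfl⟩, rfl⟩
          have h2 : pv α d (i :: l) ≤ sSup (S i) := le_csSup (hbdd i) hmem2
          linarith [hcons, h2]
      linarith [key]
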